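/- arXiv:2410.04640 — 4 statements merged into one kernel-verified Lean document; each statement's English description precedes it below -/
import Mathlib

section
/- Let (Ω, F, P) be a probability space, let (T, 𝒯) be a measurable space (of trajectories), and let τ¹, …, τ^M, τ : Ω → T be independent and identically distributed T-valued random variables. Let N ∈ ℕ, let J : T → ℕ be measurable with J(t) ≤ N for all t ∈ T (the number of policy-inference steps of a trajectory), and for each i ∈ ℕ let dᵢ : T → ℝ be measurable with dᵢ(t) ≥ 0 for all t ∈ T (the per-step statistical distances). Define the cumulative temporal consistency score η_j(t) := Σ_{i<j} dᵢ(t) and the terminal score η(t) := η_{J(t)}(t). Let δ ∈ (0,1) satisfy ⌈(M+1)(1−δ)⌉ ≤ M, and let γ : Ω → ℝ be the (random) conformal quantile of the calibration scores sᵢ := η(τⁱ), namely γ := inf{ξ ∈ ℝ : #{i ∈ {1,…,M} : sᵢ ≤ ξ} ≥ ⌈(M+1)(1−δ)⌉}. Then the false positive rate is at most δ: P(∃ j with 0 ≤ j ≤ J(τ) such that η_j(τ) > γ) ≤ δ. -/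
open MeasureTheory ProbabilityTheory

open scoped ENNReal

lemma stac_comb {n k : ℕ} (hkn : k < n) (x : Fin n → ℝ) :
    (Finset.univ.filter (fun j : Fin n =>
       k ≤ (Finset.univ.filter (fun i : Fin n => i ≠ j ∧ x i < x j)).card)).card ≤ n - k := by
  classical
  set σ := Tuple.sort x with hσ
  have hmono := Tuple.monotone_sort x
  set G := (Finset.univ.filter (fun j : Fin n =>
       k ≤ (Finset.univ.filter (fun i : Fin n => i ≠ j ∧ x i < x j)).card)) with hG
  have hsub : Finset.image σ (Finset.Iio (⟨k, hkn⟩ : Fin n)) ⊆ Gᶜ := by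
    intro j hj
    obtain ⟨p, hp, rfl⟩ := Finset.mem_image.mp hj
    rw [Finset.mem_Iio] at hp
    rw [Finset.mem_compl, hG, Finset.mem_filter]
    push_neg
    intro _
    have h2 : (Finset.univ.filter (fun i : Fin n => i ≠ σ p ∧ x i < x (σ p))).card ≤ p.val := by
      calc (Finset.univ.filter (fun i : Fin n => i ≠ σ p ∧ x i < x (σ p))).card
          ≤ (Finset.Iio p).card := by
            apply Finset.card_le_card_of_injOn (fun i => σ.symm i)
            · intro i hi
              rw [Finset.mem_coe, Finset.mem_filter] at hi
              rw [Finset.mem_coe, Finset.mem_Iio]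
              by_contra hle
              push_neg at hle
              have := hmono hle
              simp only [← hσ, Function.comp_apply, Equiv.apply_symm_apply] at this
              exact absurd (lt_of_lt_of_le hi.2.2 this) (lt_irrefl _)
            · exact fun a _ b _ h => σ.symm.injective h
        _ = p.val := Fin.card_Iio p
    calc (Finset.univ.filter (fun i : Fin n => i ≠ σ p ∧ x i < x (σ p))).card
        ≤ p.val := h2
      _ < k := hp
  have hk' : k ≤ Gᶜ.card := by
    calc k = (⟨k, hkn⟩ : Fin n).val := rfl
      _ = (Finset.Iio (⟨k, hkn⟩ : Fin n)).card := (Fin.card_Iio _).symm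
      _ = (Finset.image σ (Finset.Iio (⟨k, hkn⟩ : Fin n))).card :=
          (Finset.card_image_of_injective _ σ.injective).symm
      _ ≤ Gᶜ.card := Finset.card_le_card hsub
  have h3 : Gᶜ.card = Fintype.card (Fin n) - G.card := Finset.card_compl G
  have h4 : G.card ≤ Fintype.card (Fin n) := Finset.card_le_univ G
  rw [Fintype.card_fin] at h3 h4
  omega

lemma stac_joint_law {Ω : Type*} [MeasurableSpace Ω] (P : Measure Ω) [IsProbabilityMeasure P]
    {n : ℕ} (X : Fin n → Ω → ℝ) (hX : ∀ i, Measurable (X i))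
    (hind : iIndepFun X P) :
    P.map (fun ω i => X i ω) = Measure.pi (fun i => P.map (X i)) := by
  haveI : ∀ i, IsProbabilityMeasure (P.map (X i)) :=
    fun i => Measure.isProbabilityMeasure_map (hX i).aemeasurable
  refine (Measure.pi_eq fun s hs => ?_).symm
  have hmeas : Measurable (fun ω i => X i ω) :=
    measurable_pi_lambda _ (fun i => hX i)
  rw [Measure.map_apply hmeas (MeasurableSet.univ_pi hs)]
  have hpre : (fun ω i => X i ω) ⁻¹' (Set.univ.pi s) = ⋂ i ∈ Finset.univ, X i ⁻¹' s i := by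
    ext ω; simp [Set.mem_pi]
  rw [hpre, hind.measure_inter_preimage_eq_mul Finset.univ (fun i _ => hs i)]
  exact Finset.prod_congr rfl fun i _ => (Measure.map_apply (hX i) (hs i)).symm

lemma stac_pi_perm {n : ℕ} (ν : Measure ℝ) [IsProbabilityMeasure ν] (e : Equiv.Perm (Fin n)) :
    (Measure.pi (fun _ : Fin n => ν)).map (fun x i => x (e i))
      = Measure.pi (fun _ : Fin n => ν) := by
  refine (Measure.pi_eq fun s hs => ?_).symm
  have hmeas : Measurable (fun (x : Fin n → ℝ) i => x (e i)) :=
    measurable_pi_lambda _ (fun i => measurable_pi_apply (e i))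
  rw [Measure.map_apply hmeas (MeasurableSet.univ_pi hs)]
  have hpre : (fun (x : Fin n → ℝ) i => x (e i)) ⁻¹' (Set.univ.pi s)
      = Set.univ.pi (fun j => s (e.symm j)) := by
    ext x
    simp only [Set.mem_preimage, Set.mem_pi, Set.mem_univ, true_implies]
    constructor
    · intro h j; simpa using h (e.symm j)
    · intro h i; simpa using h (e i)
  rw [hpre, Measure.pi_pi]
  exact Equiv.prod_comp e.symm (fun j => ν (s j))

/-- STAC has low false positive rate. Trajectories
`τ 0, …, τ (M-1)` (calibration, `τ i.castSucc` for `i : Fin M`) and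
`τ (Fin.last M)` (test) are i.i.d. `T`-valued random variables. `J t ≤ N` is
the number of policy-inference steps of trajectory `t`, `d i t ≥ 0` are the
per-step statistical distances, and the cumulative temporal consistency score
is `η j t = ∑_{i<j} d i t`, with terminal score `η (J t) t`. With
`δ ∈ (0,1)`, `⌈(M+1)(1-δ)⌉ ≤ M`, and `γ ω` the conformal quantile of the
calibration terminal scores, the probability that the cumulative score of the
test trajectory exceeds `γ` at some step `j ≤ J` is at most `δ`. -/
theorem stac_false_positive_rate_le
    {Ω : Type*} [MeasurableSpace Ω] (P : Measure Ω) [IsProbabilityMeasure P]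
    {T : Type*} [MeasurableSpace T]
    (M : ℕ) (τ : Fin (M + 1) → Ω → T)
    (hτmeas : ∀ i, Measurable (τ i))
    (hindep : iIndepFun τ P)
    (hid : ∀ i j, IdentDistrib (τ i) (τ j) P P)
    (N : ℕ) (J : T → ℕ) (hJmeas : Measurable J) (hJle : ∀ t, J t ≤ N)
    (d : ℕ → T → ℝ) (hdmeas : ∀ i, Measurable (d i)) (hd0 : ∀ i t, 0 ≤ d i t)
    (η : ℕ → T → ℝ) (hη : ∀ j t, η j t = ∑ i ∈ Finset.range j, d i t)
    (δ : ℝ) (hδ : δ ∈ Set.Ioo (0 : ℝ) 1)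
    (hk : ⌈(M + 1 : ℝ) * (1 - δ)⌉₊ ≤ M)
    (γ : Ω → ℝ)
    (hγ : ∀ ω, γ ω =
      sInf {ξ : ℝ | ⌈(M + 1 : ℝ) * (1 - δ)⌉₊ ≤
        (Finset.univ.filter (fun i : Fin M =>
          η (J (τ i.castSucc ω)) (τ i.castSucc ω) ≤ ξ)).card}) :
    P {ω | ∃ j ≤ J (τ (Fin.last M) ω), γ ω < η j (τ (Fin.last M) ω)}
      ≤ ENNReal.ofReal δ := by
  classical
  obtain ⟨hδ0, hδ1⟩ := hδ
  set k := ⌈(M + 1 : ℝ) * (1 - δ)⌉₊ with hkdef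
  have hk1 : 1 ≤ k := Nat.ceil_pos.mpr (by nlinarith)
  have hkM : k < M + 1 := Nat.lt_succ_of_le hk
  have hM : 1 ≤ M := le_trans hk1 hk
  -- the terminal score and the score random variables
  set s : T → ℝ := fun t => η (J t) t with hsdef
  set X : Fin (M + 1) → Ω → ℝ := fun i ω => s (τ i ω) with hXdef
  have hηmeas : ∀ n, Measurable (η n) := by
    intro n
    have h : η n = fun t => ∑ i ∈ Finset.range n, d i t := funext fun t => hη n t
    rw [h]; exact Finset.measurable_sum _ fun i _ => hdmeas i
  have hsmeas : Measurable s := by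
    have hrep : s = fun t => ∑ n ∈ Finset.range (N + 1), if J t = n then η n t else 0 := by
      funext t
      rw [Finset.sum_ite_eq, if_pos (Finset.mem_range.mpr (Nat.lt_succ_of_le (hJle t)))]
    rw [hrep]
    exact Finset.measurable_sum _ fun n _ =>
      Measurable.ite (hJmeas (measurableSet_singleton n)) (hηmeas n) measurable_const
  have hXmeas : ∀ i, Measurable (X i) := fun i => hsmeas.comp (hτmeas i)
  have hXind : iIndepFun X P :=
    hindep.comp (fun _ => s) (fun _ => hsmeas)
  set ν := P.map (X 0) with hν
  haveI : IsProbabilityMeasure ν := Measure.isProbabilityMeasure_map (hXmeas 0).aemeasurable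
  have hXlaw : ∀ i, P.map (X i) = ν := fun i => ((hid i 0).comp hsmeas).map_eq
  -- monotonicity reduction
  have hmono : ∀ t, ∀ j ≤ J t, η j t ≤ η (J t) t := by
    intro t j hj
    rw [hη, hη]
    exact Finset.sum_le_sum_of_subset_of_nonneg
      (Finset.range_subset_range.mpr hj) (fun i _ _ => hd0 i t)
  have hevent : {ω | ∃ j ≤ J (τ (Fin.last M) ω), γ ω < η j (τ (Fin.last M) ω)}
      = {ω | γ ω < X (Fin.last M) ω} := by
    ext ω
    simp only [Set.mem_setOf_eq]
    constructor
    · rintro ⟨j, hj, hγj⟩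
      exact lt_of_lt_of_le hγj (hmono _ j hj)
    · intro h; exact ⟨J (τ (Fin.last M) ω), le_refl _, h⟩
  -- the bad set in product space
  set B : Set (Fin (M + 1) → ℝ) := {x | k ≤ (Finset.univ.filter
      (fun i : Fin (M + 1) => i ≠ Fin.last M ∧ x i < x (Fin.last M))).card} with hB
  have hincl : {ω | γ ω < X (Fin.last M) ω} ⊆ (fun ω i => X i ω) ⁻¹' B := by
    intro ω hω
    simp only [Set.mem_setOf_eq] at hω
    haveI : Nonempty (Fin M) := Fin.pos_iff_nonempty.mp hM
    have hSne : ({ξ : ℝ | k ≤ (Finset.univ.filter (fun i : Fin M =>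
        η (J (τ i.castSucc ω)) (τ i.castSucc ω) ≤ ξ)).card}).Nonempty := by
      refine ⟨Finset.univ.sup' Finset.univ_nonempty
        (fun i : Fin M => η (J (τ i.castSucc ω)) (τ i.castSucc ω)), ?_⟩
      have hall : Finset.univ.filter (fun i : Fin M =>
          η (J (τ i.castSucc ω)) (τ i.castSucc ω) ≤ Finset.univ.sup' Finset.univ_nonempty
            (fun i : Fin M => η (J (τ i.castSucc ω)) (τ i.castSucc ω))) = Finset.univ := by
        apply Finset.filter_true_of_mem
        intro i _
        exact Finset.le_sup' (fun i : Fin M => η (J (τ i.castSucc ω)) (τ i.castSucc ω)) (Finset.mem_univ i)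
      rw [Set.mem_setOf_eq, hall, Finset.card_univ, Fintype.card_fin]
      exact hk
    have hγω : sInf {ξ : ℝ | k ≤ (Finset.univ.filter (fun i : Fin M =>
        η (J (τ i.castSucc ω)) (τ i.castSucc ω) ≤ ξ)).card} < X (Fin.last M) ω := by
      rw [← hγ ω]; exact hω
    obtain ⟨ξ, hξS, hξlt⟩ := exists_lt_of_csInf_lt hSne hγω
    rw [Set.mem_setOf_eq] at hξS
    have hc1 : (Finset.univ.filter (fun i : Fin M =>
          η (J (τ i.castSucc ω)) (τ i.castSucc ω) ≤ ξ)).card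
        ≤ (Finset.univ.filter (fun i : Fin (M + 1) =>
          i ≠ Fin.last M ∧ X i ω < X (Fin.last M) ω)).card := by
      apply Finset.card_le_card_of_injOn (fun i : Fin M => i.castSucc)
      · intro i hi
        rw [Finset.mem_coe, Finset.mem_filter] at hi ⊢
        refine ⟨Finset.mem_univ _, (Fin.castSucc_lt_last i).ne, ?_⟩
        calc X i.castSucc ω = η (J (τ i.castSucc ω)) (τ i.castSucc ω) := rfl
          _ ≤ ξ := hi.2
          _ < X (Fin.last M) ω := hξlt
      · exact fun a _ b _ h => Fin.castSucc_injective M h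
    show k ≤ (Finset.univ.filter (fun i : Fin (M + 1) =>
        i ≠ Fin.last M ∧ X i ω < X (Fin.last M) ω)).card
    exact le_trans hξS hc1
  -- measurability of the bad sets
  have hBmeas : ∀ c : Fin (M + 1), MeasurableSet {x : Fin (M + 1) → ℝ | k ≤ (Finset.univ.filter
      (fun i : Fin (M + 1) => i ≠ c ∧ x i < x c)).card} := by
    intro c
    have hf : Measurable (fun x : Fin (M + 1) → ℝ =>
        (Finset.univ.filter (fun i : Fin (M + 1) => i ≠ c ∧ x i < x c)).card) := by
      simp only [Finset.card_filter]
      apply Finset.measurable_sum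
      intro i _
      refine Measurable.ite ?_ measurable_const measurable_const
      by_cases hic : i = c
      · have : {x : Fin (M + 1) → ℝ | i ≠ c ∧ x i < x c} = ∅ := by
          ext x; simp [hic]
        rw [this]; exact MeasurableSet.empty
      · have : {x : Fin (M + 1) → ℝ | i ≠ c ∧ x i < x c} = {x | x i < x c} := by
          ext x; simp [hic]
        rw [this]
        exact measurableSet_lt (measurable_pi_apply i) (measurable_pi_apply c)
    exact hf ((Set.to_countable _).measurableSet)
  -- joint law
  have hYmeas : Measurable (fun ω i => X i ω) := measurable_pi_lambda _ fun i => hXmeas i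
  have hjoint : P.map (fun ω i => X i ω) = Measure.pi (fun _ : Fin (M + 1) => ν) := by
    rw [stac_joint_law P X hXmeas hXind]
    exact congrArg Measure.pi (funext hXlaw)
  set μ := Measure.pi (fun _ : Fin (M + 1) => ν) with hμ
  haveI : IsProbabilityMeasure μ := by rw [hμ]; infer_instance
  -- exchangeability
  have hperm : ∀ c : Fin (M + 1),
      μ {x : Fin (M + 1) → ℝ | k ≤ (Finset.univ.filter
        (fun i : Fin (M + 1) => i ≠ c ∧ x i < x c)).card} = μ B := by
    intro c
    set e : Equiv.Perm (Fin (M + 1)) := Equiv.swap c (Fin.last M) with he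
    have hmape : Measurable (fun (x : Fin (M + 1) → ℝ) i => x (e i)) :=
      measurable_pi_lambda _ fun i => measurable_pi_apply (e i)
    have hpre : (fun (x : Fin (M + 1) → ℝ) i => x (e i)) ⁻¹' B
        = {x : Fin (M + 1) → ℝ | k ≤ (Finset.univ.filter
          (fun i : Fin (M + 1) => i ≠ c ∧ x i < x c)).card} := by
      ext x
      simp only [Set.mem_preimage, hB, Set.mem_setOf_eq]
      have hlast : e (Fin.last M) = c := Equiv.swap_apply_right c (Fin.last M)
      have hcard : (Finset.univ.filter (fun i : Fin (M + 1) =>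
            i ≠ Fin.last M ∧ x (e i) < x (e (Fin.last M)))).card
          = (Finset.univ.filter (fun i : Fin (M + 1) => i ≠ c ∧ x i < x c)).card := by
        apply Finset.card_equiv e
        intro i
        simp only [Finset.mem_filter, Finset.mem_univ, true_and, hlast]
        constructor
        · rintro ⟨hi1, hi2⟩
          refine ⟨?_, hi2⟩
          intro hec
          apply hi1
          have : e i = e (Fin.last M) := by rw [hlast]; exact hec
          exact e.injective this
        · rintro ⟨hi1, hi2⟩
          refine ⟨?_, hi2⟩
          intro hil
          apply hi1
          rw [hil, hlast]
      rw [hcard]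
    calc μ {x : Fin (M + 1) → ℝ | k ≤ (Finset.univ.filter
          (fun i : Fin (M + 1) => i ≠ c ∧ x i < x c)).card}
        = μ ((fun (x : Fin (M + 1) → ℝ) i => x (e i)) ⁻¹' B) := by rw [hpre]
      _ = (μ.map (fun (x : Fin (M + 1) → ℝ) i => x (e i))) B :=
          (Measure.map_apply hmape (hBmeas (Fin.last M))).symm
      _ = μ B := by rw [hμ, stac_pi_perm ν e]
  -- sum bound
  have hsum : ∑ c : Fin (M + 1), μ {x : Fin (M + 1) → ℝ | k ≤ (Finset.univ.filter
        (fun i : Fin (M + 1) => i ≠ c ∧ x i < x c)).card}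
      ≤ ((M + 1 - k : ℕ) : ℝ≥0∞) := by
    have h1 : ∀ c : Fin (M + 1), μ {x : Fin (M + 1) → ℝ | k ≤ (Finset.univ.filter
          (fun i : Fin (M + 1) => i ≠ c ∧ x i < x c)).card}
        = ∫⁻ x, Set.indicator {x : Fin (M + 1) → ℝ | k ≤ (Finset.univ.filter
          (fun i : Fin (M + 1) => i ≠ c ∧ x i < x c)).card} 1 x ∂μ :=
      fun c => (lintegral_indicator_one (hBmeas c)).symm
    calc ∑ c : Fin (M + 1), μ {x : Fin (M + 1) → ℝ | k ≤ (Finset.univ.filter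
            (fun i : Fin (M + 1) => i ≠ c ∧ x i < x c)).card}
        = ∑ c : Fin (M + 1), ∫⁻ x, Set.indicator {x : Fin (M + 1) → ℝ | k ≤ (Finset.univ.filter
            (fun i : Fin (M + 1) => i ≠ c ∧ x i < x c)).card} 1 x ∂μ :=
          Finset.sum_congr rfl fun c _ => h1 c
      _ = ∫⁻ x, ∑ c : Fin (M + 1), Set.indicator {x : Fin (M + 1) → ℝ | k ≤ (Finset.univ.filter
            (fun i : Fin (M + 1) => i ≠ c ∧ x i < x c)).card} 1 x ∂μ :=
          (lintegral_finset_sum _ fun c _ => measurable_one.indicator (hBmeas c)).symm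
      _ ≤ ∫⁻ _, ((M + 1 - k : ℕ) : ℝ≥0∞) ∂μ := by
          apply lintegral_mono
          intro x
          have hcast : ∑ c : Fin (M + 1), Set.indicator {x : Fin (M + 1) → ℝ |
              k ≤ (Finset.univ.filter
              (fun i : Fin (M + 1) => i ≠ c ∧ x i < x c)).card} 1 x
              = ((Finset.univ.filter (fun c : Fin (M + 1) => k ≤ (Finset.univ.filter
                (fun i : Fin (M + 1) => i ≠ c ∧ x i < x c)).card)).card : ℝ≥0∞) := by
            rw [Finset.card_filter, Nat.cast_sum]
            apply Finset.sum_congr rfl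
            intro c _
            rw [Set.indicator_apply]
            by_cases hc : k ≤ (Finset.univ.filter
                (fun i : Fin (M + 1) => i ≠ c ∧ x i < x c)).card
            · simp [hc]
            · simp [hc]
          dsimp only
          rw [hcast]
          exact_mod_cast Nat.cast_le.mpr (stac_comb hkM x)
      _ = ((M + 1 - k : ℕ) : ℝ≥0∞) := by simp
  -- combine
  have hμB : (M + 1 : ℝ≥0∞) * μ B ≤ ((M + 1 - k : ℕ) : ℝ≥0∞) := by
    have hconst : ∑ _c : Fin (M + 1), μ B = (M + 1 : ℝ≥0∞) * μ B := by
      rw [Finset.sum_const, Finset.card_univ, Fintype.card_fin, nsmul_eq_mul]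
      norm_cast
    calc (M + 1 : ℝ≥0∞) * μ B = ∑ _c : Fin (M + 1), μ B := hconst.symm
      _ = ∑ c : Fin (M + 1), μ {x : Fin (M + 1) → ℝ | k ≤ (Finset.univ.filter
            (fun i : Fin (M + 1) => i ≠ c ∧ x i < x c)).card} :=
          Finset.sum_congr rfl fun c _ => (hperm c).symm
      _ ≤ _ := hsum
  have hreal : ((M + 1 - k : ℕ) : ℝ≥0∞) ≤ (M + 1 : ℝ≥0∞) * ENNReal.ofReal δ := by
    have h1 : ((M + 1 - k : ℕ) : ℝ) ≤ (M + 1 : ℝ) * δ := by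
      have hceil : (M + 1 : ℝ) * (1 - δ) ≤ (k : ℝ) := Nat.le_ceil _
      have hcast : ((M + 1 - k : ℕ) : ℝ) = (M + 1 : ℝ) - (k : ℝ) := by
        rw [Nat.cast_sub (le_of_lt hkM)]; push_cast; ring
      rw [hcast]; nlinarith
    calc ((M + 1 - k : ℕ) : ℝ≥0∞) = ENNReal.ofReal ((M + 1 - k : ℕ) : ℝ) :=
          (ENNReal.ofReal_natCast _).symm
      _ ≤ ENNReal.ofReal ((M + 1 : ℝ) * δ) := ENNReal.ofReal_le_ofReal h1
      _ = ENNReal.ofReal (M + 1 : ℝ) * ENNReal.ofReal δ :=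
          ENNReal.ofReal_mul (by positivity)
      _ = (M + 1 : ℝ≥0∞) * ENNReal.ofReal δ := by
          congr 1
          rw [show ((M : ℝ) + 1) = ((M + 1 : ℕ) : ℝ) by push_cast; ring,
            ENNReal.ofReal_natCast]
          push_cast; ring
  have hfinal : μ B ≤ ENNReal.ofReal δ := by
    have h := hμB.trans hreal
    have hne0 : (M + 1 : ℝ≥0∞) ≠ 0 := by
      exact_mod_cast Nat.succ_ne_zero M
    have hnetop : (M + 1 : ℝ≥0∞) ≠ ⊤ := by
      simp [ENNReal.add_ne_top]
    rwa [ENNReal.mul_le_mul_iff_right hne0 hnetop] at h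
  calc P {ω | ∃ j ≤ J (τ (Fin.last M) ω), γ ω < η j (τ (Fin.last M) ω)}
      = P {ω | γ ω < X (Fin.last M) ω} := by rw [hevent]
    _ ≤ P ((fun ω i => X i ω) ⁻¹' B) := measure_mono hincl
    _ = μ B := by
        rw [← Measure.map_apply hYmeas (hBmeas (Fin.last M)), hjoint]
    _ ≤ ENNReal.ofReal δ := hfinal
end

section
/- Let (Ω, F, P) be a probability space and let s¹, …, s^M, s_test : Ω → ℝ be independent and identically distributed real-valued random variables (conformity scores). Let δ ∈ (0,1) satisfy ⌈(M+1)(1−δ)⌉ ≤ M, and define the (random) conformal quantile γ := inf{ξ ∈ ℝ : #{i ∈ {1,…,M} : sⁱ ≤ ξ} ≥ ⌈(M+1)(1−δ)⌉}. Then P(s_test ≤ γ) ≥ 1 − δ. -/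
open MeasureTheory ProbabilityTheory
open scoped ENNReal

/-- Pigeonhole on strict ranks: at least `k` indices have strict rank `< k`. -/
lemma conformal_rank_lemma {n : ℕ} (x : Fin n → ℝ) (k : ℕ) (hk : k ≤ n) :
    k ≤ (Finset.univ.filter
      (fun j : Fin n => (Finset.univ.filter (fun i => x i < x j)).card < k)).card := by
  by_contra h
  push_neg at h
  set T := Finset.univ.filter
      (fun j : Fin n => (Finset.univ.filter (fun i => x i < x j)).card < k) with hT
  have hTne : (Finset.univ \ T).Nonempty := by
    rw [Finset.sdiff_nonempty]
    intro hsub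
    have := Finset.card_le_card hsub
    rw [Finset.card_univ, Fintype.card_fin] at this
    omega
  obtain ⟨j, hj, hjmin⟩ := Finset.exists_min_image _ x hTne
  have hsub : (Finset.univ.filter (fun i => x i < x j)) ⊆ T := by
    intro i hi
    simp only [Finset.mem_filter, Finset.mem_univ, true_and] at hi
    by_contra hiT
    have hmem : i ∈ Finset.univ \ T := by simp [hiT]
    exact absurd (hjmin i hmem) (not_le.2 hi)
  have hlt : (Finset.univ.filter (fun i => x i < x j)).card < k :=
    lt_of_le_of_lt (Finset.card_le_card hsub) h
  have hjT : j ∈ T := by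
    rw [hT]; simp only [Finset.mem_filter, Finset.mem_univ, true_and]; exact hlt
  rw [Finset.mem_sdiff] at hj
  exact hj.2 hjT

/-- split conformal coverage. If `s 0, …, s M` (calibration scores
`s i.castSucc`, `i : Fin M`, and test score `s (Fin.last M)`) are i.i.d. real
random variables, `δ ∈ (0,1)` and `⌈(M+1)(1-δ)⌉ ≤ M`, and `γ ω` is the conformal
quantile `inf {ξ | #{i : s i ω ≤ ξ} ≥ ⌈(M+1)(1-δ)⌉}` of the calibration scores,
then `P (s_test ≤ γ) ≥ 1 - δ`. -/
theorem conformal_prediction_coverage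
    {Ω : Type*} [MeasurableSpace Ω] (P : Measure Ω) [IsProbabilityMeasure P]
    (M : ℕ) (s : Fin (M + 1) → Ω → ℝ)
    (hmeas : ∀ i, Measurable (s i))
    (hindep : iIndepFun s P)
    (hid : ∀ i j, IdentDistrib (s i) (s j) P P)
    (δ : ℝ) (hδ : δ ∈ Set.Ioo (0 : ℝ) 1)
    (hk : ⌈(M + 1 : ℝ) * (1 - δ)⌉₊ ≤ M) :
    ENNReal.ofReal (1 - δ) ≤
      P {ω | s (Fin.last M) ω ≤
        sInf {ξ : ℝ | ⌈(M + 1 : ℝ) * (1 - δ)⌉₊ ≤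
          (Finset.univ.filter (fun i : Fin M => s i.castSucc ω ≤ ξ)).card}} := by
  set k : ℕ := ⌈(M + 1 : ℝ) * (1 - δ)⌉₊ with hkdef
  obtain ⟨hδ0, hδ1⟩ := hδ
  have hkpos : 0 < k := by
    rw [hkdef]
    exact Nat.ceil_pos.mpr (mul_pos (by positivity) (by linarith))
  have hM1 : 1 ≤ M := le_trans hkpos hk
  -- rank events
  set A : Fin (M + 1) → Set Ω := fun j =>
    {ω | (Finset.univ.filter (fun i => s i ω < s j ω)).card < k} with hA
  -- measurability of rank events
  have hAmeas : ∀ j, MeasurableSet (A j) := by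
    intro j
    have hcard : Measurable (fun ω =>
        (Finset.univ.filter (fun i => s i ω < s j ω)).card) := by
      simp only [Finset.card_filter]
      exact Finset.measurable_sum _ (fun i _ =>
        Measurable.ite (measurableSet_lt (hmeas i) (hmeas j))
          measurable_const measurable_const)
    exact hcard (show MeasurableSet {n : ℕ | n < k} from trivial)
  -- joint vector
  set vec : Ω → (Fin (M + 1) → ℝ) := fun ω i => s i ω with hvecdef
  have hvec : Measurable vec := measurable_pi_lambda _ hmeas
  set μ0 : Measure ℝ := P.map (s 0) with hμ0
  have hμi : ∀ i, P.map (s i) = μ0 := fun i => (hid i 0).map_eq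
  -- joint law is product
  have hpi : Measure.pi (fun _ : Fin (M + 1) => μ0) = P.map vec := by
    refine Measure.pi_eq fun E hE => ?_
    rw [Measure.map_apply hvec (MeasurableSet.univ_pi hE)]
    have hset : vec ⁻¹' Set.pi Set.univ E = ⋂ i ∈ (Finset.univ : Finset (Fin (M+1))),
        s i ⁻¹' E i := by
      ext ω; simp [Set.mem_pi, hvecdef]
    rw [hset, hindep.measure_inter_preimage_eq_mul Finset.univ (fun i _ => hE i)]
    refine Finset.prod_congr rfl fun i _ => ?_
    rw [← hμi i, Measure.map_apply (hmeas i) (hE i)]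
  -- sets in the product space
  set B : Fin (M + 1) → Set (Fin (M + 1) → ℝ) := fun j =>
    {x | (Finset.univ.filter (fun i => x i < x j)).card < k} with hB
  have hBmeas : ∀ j, MeasurableSet (B j) := by
    intro j
    have hcard : Measurable (fun x : Fin (M+1) → ℝ =>
        (Finset.univ.filter (fun i => x i < x j)).card) := by
      simp only [Finset.card_filter]
      exact Finset.measurable_sum _ (fun i _ =>
        Measurable.ite (measurableSet_lt (measurable_pi_apply i) (measurable_pi_apply j))
          measurable_const measurable_const)
    exact hcard (show MeasurableSet {n : ℕ | n < k} from trivial)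
  have hAB : ∀ j, A j = vec ⁻¹' B j := fun j => rfl
  have hPA : ∀ j, P (A j) = Measure.pi (fun _ : Fin (M + 1) => μ0) (B j) := by
    intro j
    rw [hAB j, ← Measure.map_apply hvec (hBmeas j), ← hpi]
  -- permutation invariance: P (A j) = P (A (last M))
  have hPAeq : ∀ j, P (A j) = P (A (Fin.last M)) := by
    intro j
    set σ := Equiv.swap j (Fin.last M) with hσ
    set g : (Fin (M + 1) → ℝ) → (Fin (M + 1) → ℝ) := fun x i => x (σ i) with hg
    have hgmeas : Measurable g :=
      measurable_pi_lambda _ (fun i => measurable_pi_apply (σ i))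
    have hmap : (Measure.pi (fun _ : Fin (M + 1) => μ0)).map g
        = Measure.pi (fun _ : Fin (M + 1) => μ0) := by
      refine (Measure.pi_eq fun E hE => ?_).symm
      rw [Measure.map_apply hgmeas (MeasurableSet.univ_pi hE)]
      have hset : g ⁻¹' Set.pi Set.univ E
          = Set.pi Set.univ (fun i => E (σ.symm i)) := by
        ext x
        simp only [Set.mem_preimage, Set.mem_pi, Set.mem_univ, true_implies, hg]
        constructor
        · intro h i'; have := h (σ.symm i'); simpa using this
        · intro h i; have := h (σ i); simpa using this
      rw [hset, Measure.pi_pi]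
      exact Equiv.prod_comp σ.symm (fun i => μ0 (E i))
    have hBg : B j = g ⁻¹' B (Fin.last M) := by
      ext x
      simp only [hB, Set.mem_setOf_eq, Set.mem_preimage, hg]
      have hσlast : σ (Fin.last M) = j := Equiv.swap_apply_right _ _
      have hcardeq : (Finset.univ.filter (fun i => x (σ i) < x (σ (Fin.last M)))).card
          = (Finset.univ.filter (fun i => x i < x j)).card := by
        rw [hσlast]
        apply Finset.card_bij (fun i _ => σ i)
        · intro i hi
          simp only [Finset.mem_filter, Finset.mem_univ, true_and] at hi ⊢
          exact hi
        · intro a ha b hb hab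
          exact σ.injective hab
        · intro b hb
          simp only [Finset.mem_filter, Finset.mem_univ, true_and] at hb
          exact ⟨σ.symm b, by simp [hb], by simp⟩
      rw [hcardeq]
    rw [hPA j, hPA (Fin.last M), hBg, ← Measure.map_apply hgmeas (hBmeas (Fin.last M)), hmap]
  -- sum of indicators lower bound
  have hsum : (k : ℝ≥0∞) ≤ ∑ j : Fin (M + 1), P (A j) := by
    have hpt : ∀ ω, (k : ℝ≥0∞)
        ≤ ∑ j : Fin (M + 1), (A j).indicator (fun _ => (1 : ℝ≥0∞)) ω := by
      intro ω
      have hr := conformal_rank_lemma (fun i => s i ω) k (by omega)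
      have : ∑ j : Fin (M + 1), (A j).indicator (fun _ => (1 : ℝ≥0∞)) ω
          = ((Finset.univ.filter (fun j : Fin (M+1) =>
              (Finset.univ.filter (fun i => s i ω < s j ω)).card < k)).card : ℝ≥0∞) := by
        rw [← Finset.sum_boole]
        refine Finset.sum_congr rfl fun j _ => ?_
        by_cases hj : ω ∈ A j
        · have hj' : (Finset.univ.filter (fun i => s i ω < s j ω)).card < k := hj
          simp [Set.indicator_of_mem hj, hj']
        · have hj' : ¬ (Finset.univ.filter (fun i => s i ω < s j ω)).card < k := hj
          simp [Set.indicator_of_notMem hj, hj']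
      rw [this]
      exact_mod_cast Nat.cast_le.mpr hr
    calc (k : ℝ≥0∞) = ∫⁻ _, (k : ℝ≥0∞) ∂P := by simp
      _ ≤ ∫⁻ ω, ∑ j : Fin (M + 1), (A j).indicator (fun _ => (1 : ℝ≥0∞)) ω ∂P :=
          lintegral_mono hpt
      _ = ∑ j : Fin (M + 1), ∫⁻ ω, (A j).indicator (fun _ => (1 : ℝ≥0∞)) ω ∂P :=
          lintegral_finset_sum _ (fun j _ => (measurable_one.indicator (hAmeas j)))
      _ = ∑ j : Fin (M + 1), P (A j) := by
          refine Finset.sum_congr rfl fun j _ => ?_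
          exact lintegral_indicator_one (hAmeas j)
  -- hence P (A last) ≥ k / (M+1) ≥ 1 - δ
  have hksum : (k : ℝ≥0∞) ≤ (M + 1 : ℝ≥0∞) * P (A (Fin.last M)) := by
    calc (k : ℝ≥0∞) ≤ ∑ j : Fin (M + 1), P (A j) := hsum
      _ = ∑ _j : Fin (M + 1), P (A (Fin.last M)) :=
          Finset.sum_congr rfl fun j _ => hPAeq j
      _ = (M + 1 : ℝ≥0∞) * P (A (Fin.last M)) := by
          rw [Finset.sum_const, Finset.card_univ, Fintype.card_fin, nsmul_eq_mul]
          norm_cast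
  have hmain : ENNReal.ofReal (1 - δ) ≤ P (A (Fin.last M)) := by
    have hfin : ((M : ℝ≥0∞) + 1) ≠ ⊤ := by simp
    have hne : ((M : ℝ≥0∞) + 1) ≠ 0 := by simp
    rw [← ENNReal.mul_le_mul_iff_left hne hfin]
    calc ENNReal.ofReal (1 - δ) * ((M : ℝ≥0∞) + 1)
        = ENNReal.ofReal ((1 - δ) * (M + 1)) := by
          rw [ENNReal.ofReal_mul (by linarith)]
          congr 1
          rw [show ((M : ℝ) + 1) = ((M + 1 : ℕ) : ℝ) by push_cast; ring,
            ENNReal.ofReal_natCast]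
          push_cast; ring
      _ ≤ (k : ℝ≥0∞) := by
          rw [← ENNReal.ofReal_natCast k]
          apply ENNReal.ofReal_le_ofReal
          rw [hkdef, mul_comm]
          exact Nat.le_ceil _
      _ ≤ (M + 1 : ℝ≥0∞) * P (A (Fin.last M)) := hksum
      _ = P (A (Fin.last M)) * ((M : ℝ≥0∞) + 1) := by ring
  -- inclusion of the rank event in the target event
  refine le_trans hmain (measure_mono ?_)
  intro ω hω
  have hωA : (Finset.univ.filter (fun i => s i ω < s (Fin.last M) ω)).card < k := hω
  have hne : (Finset.univ : Finset (Fin M)).Nonempty := by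
    have : (0 : ℕ) < M := hM1
    exact ⟨⟨0, this⟩, Finset.mem_univ _⟩
  simp only [Set.mem_setOf_eq]
  apply le_csInf
  · refine ⟨Finset.univ.sup' hne (fun i : Fin M => s i.castSucc ω), ?_⟩
    simp only [Set.mem_setOf_eq]
    have : Finset.univ.filter (fun i : Fin M =>
        s i.castSucc ω ≤ Finset.univ.sup' hne (fun i : Fin M => s i.castSucc ω))
        = Finset.univ := by
      apply Finset.filter_true_of_mem
      intro i _
      exact Finset.le_sup' (fun i : Fin M => s i.castSucc ω) (Finset.mem_univ i)
    rw [this, Finset.card_univ, Fintype.card_fin]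
    exact hk
  · intro ξ hξ
    simp only [Set.mem_setOf_eq] at hξ
    by_contra hlt
    push_neg at hlt
    have hsub : ∀ i ∈ Finset.univ.filter (fun i : Fin M => s i.castSucc ω ≤ ξ),
        (i.castSucc) ∈ Finset.univ.filter (fun i => s i ω < s (Fin.last M) ω) := by
      intro i hi
      simp only [Finset.mem_filter, Finset.mem_univ, true_and] at hi ⊢
      exact lt_of_le_of_lt hi hlt
    have hcard : (Finset.univ.filter (fun i : Fin M => s i.castSucc ω ≤ ξ)).card
        ≤ (Finset.univ.filter (fun i => s i ω < s (Fin.last M) ω)).card := by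
      apply Finset.card_le_card_of_injOn Fin.castSucc hsub
      intro a _ b _ hab
      exact Fin.castSucc_injective M hab
    omega
end

section
/- Let (Ω, F, P) be a probability space and let X₁, …, X_{n+1} : Ω → ℝ be independent and identically distributed real-valued random variables such that P(Xᵢ = X_j) = 0 for all i ≠ j (almost surely distinct values). Then the rank of X_{n+1} among the full sample is uniformly distributed on {1, …, n+1}: for every k ∈ {1, …, n+1}, P(#{i ∈ {1,…,n+1} : Xᵢ ≤ X_{n+1}} = k) = 1/(n+1). -/
open MeasureTheory ProbabilityTheory Finset

namespace RankAux

variable {m : ℕ}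

noncomputable def rank (x : Fin m → ℝ) (j : Fin m) : ℕ :=
  (Finset.univ.filter (fun i => x i ≤ x j)).card

lemma measurable_rank (j : Fin m) : Measurable (fun x : Fin m → ℝ => rank x j) := by
  have h : (fun x : Fin m → ℝ => rank x j)
      = fun x => ∑ i : Fin m, if x i ≤ x j then 1 else 0 := by
    funext x; rw [rank, Finset.card_filter]
  rw [h]
  exact Finset.measurable_sum _ fun i _ =>
    Measurable.ite (measurableSet_le (measurable_pi_apply i) (measurable_pi_apply j))
      measurable_const measurable_const

lemma rank_pos (x : Fin m → ℝ) (j : Fin m) : 1 ≤ rank x j :=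
  Finset.card_pos.mpr ⟨j, by simp⟩

lemma rank_le (x : Fin m → ℝ) (j : Fin m) : rank x j ≤ m := by
  simpa [rank] using Finset.card_filter_le Finset.univ (fun i => x i ≤ x j)

lemma rank_injective {x : Fin m → ℝ} (hx : Function.Injective x) :
    Function.Injective (rank x) := by
  intro j j' h
  by_contra hne
  have hxx : x j ≠ x j' := fun e => hne (hx e)
  have key : ∀ a b : Fin m, x a < x b → rank x a < rank x b := by
    intro a b hab
    have hsub : Finset.univ.filter (fun i => x i ≤ x a)
        ⊆ Finset.univ.filter (fun i => x i ≤ x b) := by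
      intro i hi
      simp only [Finset.mem_filter, Finset.mem_univ, true_and] at hi ⊢
      exact hi.trans hab.le
    refine Finset.card_lt_card ((Finset.ssubset_iff_of_subset hsub).mpr ⟨b, ?_, ?_⟩)
    · simp
    · simp [not_le.mpr hab]
  rcases lt_or_gt_of_ne hxx with hlt | hlt
  · exact absurd h (key j j' hlt).ne
  · exact absurd h.symm (key j' j hlt).ne

lemma exists_rank_eq {x : Fin m → ℝ} (hx : Function.Injective x) {k : ℕ}
    (hk1 : 1 ≤ k) (hk2 : k ≤ m) : ∃ j, rank x j = k := by
  have himg : Finset.univ.image (rank x) = Finset.Icc 1 m := by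
    apply Finset.eq_of_subset_of_card_le
    · intro a ha
      rcases Finset.mem_image.mp ha with ⟨j, _, rfl⟩
      exact Finset.mem_Icc.mpr ⟨rank_pos x j, rank_le x j⟩
    · rw [Nat.card_Icc, Finset.card_image_of_injective _ (rank_injective hx)]
      simp
  have : k ∈ Finset.univ.image (rank x) := by
    rw [himg]; exact Finset.mem_Icc.mpr ⟨hk1, hk2⟩
  simpa using this

lemma rank_comp (x : Fin m → ℝ) (σ : Equiv.Perm (Fin m)) (j : Fin m) :
    rank (x ∘ σ) j = rank x (σ j) := by
  unfold rank
  exact Finset.card_equiv σ (fun i => by simp)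

lemma pi_map_comp_perm (ν : Measure ℝ) [IsProbabilityMeasure ν] (σ : Equiv.Perm (Fin m)) :
    (Measure.pi (fun _ : Fin m => ν)).map (fun x => x ∘ σ) = Measure.pi (fun _ => ν) := by
  refine (Measure.pi_eq fun s hs => ?_).symm
  rw [Measure.map_apply (f := fun x : Fin m → ℝ => x ∘ σ)
    (measurable_pi_lambda _ fun i => measurable_pi_apply (σ i)) (MeasurableSet.univ_pi hs)]
  have hpre : (fun x : Fin m → ℝ => x ∘ σ) ⁻¹' Set.pi Set.univ s
      = Set.pi Set.univ (fun j => s (σ.symm j)) := by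
    ext x
    simp only [Set.mem_preimage, Set.mem_pi, Set.mem_univ, true_implies, Function.comp]
    constructor
    · intro h j; simpa using h (σ.symm j)
    · intro h i; simpa using h (σ i)
  rw [hpre, Measure.pi_pi]
  exact Equiv.prod_comp σ.symm (fun i => ν (s i))

end RankAux

open Finset in

/-- rank uniformity. If `X 0, …, X n` are i.i.d. real random
variables that are pairwise almost-surely distinct, then the rank
`#{i : X i ≤ X (Fin.last n)}` of the last one in the full sample is uniform on
`{1, …, n+1}`. -/
theorem rank_of_last_uniform
    {Ω : Type*} [MeasurableSpace Ω] (P : Measure Ω) [IsProbabilityMeasure P]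
    (n : ℕ) (X : Fin (n + 1) → Ω → ℝ)
    (hmeas : ∀ i, Measurable (X i))
    (hindep : iIndepFun X P)
    (hid : ∀ i j, IdentDistrib (X i) (X j) P P)
    (hdistinct : ∀ i j, i ≠ j → P {ω | X i ω = X j ω} = 0)
    (k : ℕ) (hk1 : 1 ≤ k) (hk2 : k ≤ n + 1) :
    P {ω | (Finset.univ.filter
        (fun i : Fin (n + 1) => X i ω ≤ X (Fin.last n) ω)).card = k}
      = 1 / ((n : ENNReal) + 1) := by
  classical
  set φ : Ω → (Fin (n + 1) → ℝ) := fun ω i => X i ω with hφdef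
  have hφ : Measurable φ := measurable_pi_lambda _ hmeas
  set ν : Measure ℝ := P.map (X (Fin.last n)) with hνdef
  haveI : IsProbabilityMeasure ν := Measure.isProbabilityMeasure_map (hmeas _).aemeasurable
  set μ : Measure (Fin (n + 1) → ℝ) := P.map φ with hμdef
  -- joint law is the product measure
  have hμ : μ = Measure.pi (fun _ : Fin (n + 1) => ν) := by
    refine (Measure.pi_eq fun s hs => ?_).symm
    rw [hμdef, Measure.map_apply hφ (MeasurableSet.univ_pi hs)]
    have hpre : φ ⁻¹' Set.pi Set.univ s = ⋂ i ∈ Finset.univ, X i ⁻¹' s i := by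
      ext ω; simp [hφdef, Set.mem_pi]
    rw [hpre, hindep.measure_inter_preimage_eq_mul Finset.univ (fun i _ => hs i)]
    refine Finset.prod_congr rfl fun i _ => ?_
    rw [hνdef, ← (hid i (Fin.last n)).map_eq, Measure.map_apply (hmeas i) (hs i)]
  haveI : IsProbabilityMeasure μ := Measure.isProbabilityMeasure_map hφ.aemeasurable
  -- the rank level sets
  set S : Fin (n + 1) → Set (Fin (n + 1) → ℝ) := fun j => {x | RankAux.rank x j = k}
    with hSdef
  have hS : ∀ j, MeasurableSet (S j) := fun j =>
    RankAux.measurable_rank j (measurableSet_singleton k)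
  -- exchangeability: all ranks equally likely
  have hSeq : ∀ j, μ (S j) = μ (S (Fin.last n)) := by
    intro j
    have hperm := RankAux.pi_map_comp_perm ν (Equiv.swap j (Fin.last n))
    have hmeasT : Measurable fun x : Fin (n + 1) → ℝ => x ∘ (Equiv.swap j (Fin.last n)) :=
      measurable_pi_lambda _ fun i => measurable_pi_apply _
    have hpre : (fun x : Fin (n + 1) → ℝ => x ∘ (Equiv.swap j (Fin.last n))) ⁻¹' S j
        = S (Fin.last n) := by
      ext x
      simp only [hSdef, Set.mem_preimage, Set.mem_setOf_eq,
        RankAux.rank_comp, Equiv.swap_apply_left]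
    calc μ (S j) = (μ.map (fun x => x ∘ (Equiv.swap j (Fin.last n)))) (S j) := by
          rw [hμ, hperm]
      _ = μ ((fun x : Fin (n + 1) → ℝ => x ∘ (Equiv.swap j (Fin.last n))) ⁻¹' S j) :=
          Measure.map_apply hmeasT (hS j)
      _ = μ (S (Fin.last n)) := by rw [hpre]
  -- the injective tuples have full measure
  set D : Set (Fin (n + 1) → ℝ) := {x | Function.Injective x} with hDdef
  have hDmeas : MeasurableSet D := by
    have : D = ⋂ (i) (j) (_ : i ≠ j), {x : Fin (n + 1) → ℝ | x i = x j}ᶜ := by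
      ext x
      simp only [hDdef, Set.mem_iInter, Set.mem_compl_iff, Set.mem_setOf_eq, Function.Injective]
      constructor
      · intro h i j hij hxx; exact hij (h hxx)
      · intro h a b hab; by_contra hne; exact h a b hne hab
    rw [this]
    exact MeasurableSet.iInter fun i => MeasurableSet.iInter fun j =>
      MeasurableSet.iInter fun _ =>
        (measurableSet_eq_fun (measurable_pi_apply i) (measurable_pi_apply j)).compl
  have hDc : μ Dᶜ = 0 := by
    have hsub : Dᶜ ⊆ ⋃ (i) (j) (_ : i ≠ j), {x : Fin (n + 1) → ℝ | x i = x j} := by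
      intro x hx
      simp only [hDdef, Set.mem_compl_iff, Set.mem_setOf_eq, Function.Injective, not_forall] at hx
      obtain ⟨i, j, hij, hne⟩ := hx
      exact Set.mem_iUnion.mpr ⟨i, Set.mem_iUnion.mpr ⟨j, Set.mem_iUnion.mpr ⟨hne, hij⟩⟩⟩
    refine measure_mono_null hsub ?_
    refine measure_iUnion_null fun i => measure_iUnion_null fun j =>
      measure_iUnion_null fun hne => ?_
    have hmeasE : MeasurableSet {x : Fin (n + 1) → ℝ | x i = x j} :=
      measurableSet_eq_fun (measurable_pi_apply i) (measurable_pi_apply j)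
    rw [hμdef, Measure.map_apply hφ hmeasE]
    exact hdistinct i j hne
  -- the level sets partition the injective tuples
  have hcover : (⋃ j, S j ∩ D) = D := by
    apply Set.Subset.antisymm
    · exact Set.iUnion_subset fun j => Set.inter_subset_right
    · intro x hx
      obtain ⟨j, hj⟩ := RankAux.exists_rank_eq hx hk1 hk2
      exact Set.mem_iUnion.mpr ⟨j, ⟨hj, hx⟩⟩
  have hdisj : Pairwise (Function.onFun Disjoint fun j => S j ∩ D) := by
    intro a b hab
    refine Set.disjoint_left.mpr fun x hxa hxb => ?_
    exact hab (RankAux.rank_injective hxb.2 (hxa.1.trans hxb.1.symm))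
  have hsum : ∑ j : Fin (n + 1), μ (S j) = 1 := by
    have h1 : ∀ j, μ (S j) = μ (S j ∩ D) := fun j => by
      rw [measure_inter_conull hDc]
    calc ∑ j : Fin (n + 1), μ (S j) = ∑ j : Fin (n + 1), μ (S j ∩ D) := by
          exact Finset.sum_congr rfl fun j _ => h1 j
      _ = μ (⋃ j, S j ∩ D) := by
          rw [← tsum_fintype (L := SummationFilter.unconditional _)]
          exact (measure_iUnion hdisj fun j => (hS j).inter hDmeas).symm
      _ = μ D := by rw [hcover]
      _ = 1 := by
          exact (prob_compl_eq_zero_iff hDmeas).mp hDc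
  have hconst : ∑ j : Fin (n + 1), μ (S j) = ((n : ENNReal) + 1) * μ (S (Fin.last n)) := by
    rw [Finset.sum_congr rfl fun j _ => hSeq j, Finset.sum_const, Finset.card_univ,
      Fintype.card_fin, nsmul_eq_mul]
    push_cast
    ring_nf
  have hval : μ (S (Fin.last n)) = 1 / ((n : ENNReal) + 1) := by
    have hc : ((n : ENNReal) + 1) ≠ 0 := by simp
    have hct : ((n : ENNReal) + 1) ≠ ⊤ := by
      exact ENNReal.add_ne_top.mpr ⟨ENNReal.natCast_ne_top n, ENNReal.one_ne_top⟩
    rw [ENNReal.eq_div_iff hc hct, ← hconst, hsum]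
  rw [← hval, hμdef, Measure.map_apply hφ (hS (Fin.last n))]
  congr 1
end

section
/- Let (Ω, F, P) be a probability space and let X₁, …, X_{n+1} : Ω → ℝ be independent and identically distributed real-valued random variables (ties allowed). Then for every k ∈ {1, …, n+1}, P(#{i ∈ {1,…,n+1} : Xᵢ < X_{n+1}} ≤ k − 1) ≥ k/(n+1). -/
open MeasureTheory ProbabilityTheory
open Finset in

lemma rank_count_lb {n k : ℕ} (hk1 : 1 ≤ k) (hk2 : k ≤ n + 1) (x : Fin (n + 1) → ℝ) :
    k ≤ (Finset.univ.filter (fun j : Fin (n+1) =>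
      (Finset.univ.filter (fun i : Fin (n+1) => x i < x j)).card ≤ k - 1)).card := by
  classical
  set σ := Tuple.sort x with hσ
  have hmono := Tuple.monotone_sort x
  have hmem : ∀ (m : Fin (n+1)), (m : ℕ) < k →
      σ m ∈ Finset.univ.filter (fun j : Fin (n+1) =>
        (Finset.univ.filter (fun i : Fin (n+1) => x i < x j)).card ≤ k - 1) := by
    intro m hm
    simp only [mem_filter, mem_univ, true_and]
    have hsub : Finset.univ.filter (fun i : Fin (n+1) => x i < x (σ m)) ⊆
        (Finset.Iio m).image σ := by
      intro i hi
      simp only [mem_filter, mem_univ, true_and] at hi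
      simp only [mem_image, Finset.mem_Iio]
      refine ⟨σ.symm i, ?_, σ.apply_symm_apply i⟩
      by_contra h
      push_neg at h
      have := hmono h
      simp only [Function.comp_apply, Equiv.apply_symm_apply] at this
      rw [← hσ, Equiv.apply_symm_apply] at this
      exact absurd hi (not_lt.mpr this)
    calc (Finset.univ.filter (fun i : Fin (n+1) => x i < x (σ m))).card
        ≤ ((Finset.Iio m).image σ).card := Finset.card_le_card hsub
      _ ≤ (Finset.Iio m).card := Finset.card_image_le
      _ = (m : ℕ) := Fin.card_Iio m
      _ ≤ k - 1 := by omega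
  have hfe : Finset.univ.filter (fun m : Fin (n+1) => (m : ℕ) < k)
      = Finset.Iic (⟨k-1, by omega⟩ : Fin (n+1)) := by
    ext m
    simp only [mem_filter, mem_univ, true_and, Finset.mem_Iic, Fin.le_def]
    omega
  calc k = ((Finset.univ.filter (fun m : Fin (n+1) => (m : ℕ) < k)).image σ).card := by
          rw [Finset.card_image_of_injective _ σ.injective, hfe, Fin.card_Iic]; simp; omega
    _ ≤ _ := by
          refine Finset.card_le_card ?_
          intro j hj
          obtain ⟨m, hm, rfl⟩ := Finset.mem_image.mp hj
          exact hmem m (Finset.mem_filter.mp hm).2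

open MeasureTheory ProbabilityTheory
open Finset in

/-- tie-robust rank bound. If `X 0, …, X n` are i.i.d. real random
variables (ties allowed), then for every `k ∈ {1, …, n+1}`,
`P (#{i : X i < X (Fin.last n)} ≤ k - 1) ≥ k / (n + 1)`. -/
theorem strict_rank_of_last_le_prob_ge
    {Ω : Type*} [MeasurableSpace Ω] (P : Measure Ω) [IsProbabilityMeasure P]
    (n : ℕ) (X : Fin (n + 1) → Ω → ℝ)
    (hmeas : ∀ i, Measurable (X i))
    (hindep : iIndepFun X P)
    (hid : ∀ i j, IdentDistrib (X i) (X j) P P)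
    (k : ℕ) (hk1 : 1 ≤ k) (hk2 : k ≤ n + 1) :
    (k : ENNReal) / ((n : ENNReal) + 1) ≤
      P {ω | (Finset.univ.filter
        (fun i : Fin (n + 1) => X i ω < X (Fin.last n) ω)).card ≤ k - 1} := by
  classical
  set V : Ω → (Fin (n+1) → ℝ) := fun ω i => X i ω with hV
  have hVmeas : Measurable V := measurable_pi_iff.mpr hmeas
  set μ : Measure ℝ := P.map (X (Fin.last n)) with hμ
  haveI : IsProbabilityMeasure μ := Measure.isProbabilityMeasure_map (hmeas _).aemeasurable
  set ν : Measure (Fin (n+1) → ℝ) := Measure.pi (fun _ => μ) with hν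
  -- joint law is the iid product
  have hlaw : P.map V = ν := by
    rw [hν]
    refine (Measure.pi_eq (μ := fun _ : Fin (n+1) => μ) (fun s hs => ?_)).symm
    rw [Measure.map_apply hVmeas (MeasurableSet.univ_pi hs)]
    have hpre : V ⁻¹' (Set.pi Set.univ s)
        = ⋂ i ∈ (Finset.univ : Finset (Fin (n+1))), X i ⁻¹' s i := by
      ext ω
      simp [hV, Set.mem_pi]
    rw [hpre, hindep.measure_inter_preimage_eq_mul Finset.univ (fun i _ => hs i)]
    refine Finset.prod_congr rfl (fun i _ => ?_)
    rw [← Measure.map_apply (hmeas i) (hs i), (hid i (Fin.last n)).map_eq]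
  -- events
  set B : Fin (n+1) → Set (Fin (n+1) → ℝ) := fun j =>
    {x | (Finset.univ.filter (fun i : Fin (n+1) => x i < x j)).card ≤ k - 1} with hB
  set A : Fin (n+1) → Set Ω := fun j =>
    {ω | (Finset.univ.filter (fun i : Fin (n+1) => X i ω < X j ω)).card ≤ k - 1} with hA
  have hBmeas : ∀ j, MeasurableSet (B j) := by
    intro j
    have hf : Measurable (fun x : Fin (n+1) → ℝ =>
        (Finset.univ.filter (fun i : Fin (n+1) => x i < x j)).card) := by
      have : (fun x : Fin (n+1) → ℝ =>
          (Finset.univ.filter (fun i : Fin (n+1) => x i < x j)).card)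
          = fun x => ∑ i : Fin (n+1), if x i < x j then 1 else 0 := by
        ext x
        simp [Finset.sum_boole]
      rw [this]
      refine Finset.measurable_sum _ (fun i _ => ?_)
      exact Measurable.ite (measurableSet_lt (measurable_pi_apply i) (measurable_pi_apply j))
        measurable_const measurable_const
    have : B j = (fun x : Fin (n+1) → ℝ =>
        (Finset.univ.filter (fun i : Fin (n+1) => x i < x j)).card) ⁻¹' (Set.Iic (k-1)) := rfl
    rw [this]
    exact hf trivial
  have hAeq : ∀ j, A j = V ⁻¹' (B j) := fun j => rfl
  have hAmeas : ∀ j, MeasurableSet (A j) := fun j => hVmeas (hBmeas j)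
  -- exchangeability: P (A j) is the same for all j
  have hsame : ∀ j, P (A j) = ν (B (Fin.last n)) := by
    intro j
    set e : Equiv.Perm (Fin (n+1)) := Equiv.swap j (Fin.last n) with he
    set T := MeasurableEquiv.piCongrLeft (fun _ : Fin (n+1) => ℝ) e with hT
    have hTapp : ∀ (x : Fin (n+1) → ℝ) (i : Fin (n+1)), T x i = x (e.symm i) := by
      intro x i
      have : T x (e (e.symm i)) = x (e.symm i) := by
        rw [hT, MeasurableEquiv.piCongrLeft_apply_apply]
      rwa [Equiv.apply_symm_apply] at this
    have hTB : T ⁻¹' (B (Fin.last n)) = B j := by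
      ext x
      simp only [hB, Set.mem_preimage, Set.mem_setOf_eq]
      have hlast : e.symm (Fin.last n) = j := by
        rw [he, Equiv.symm_swap, Equiv.swap_apply_right]
      have hcard : (Finset.univ.filter (fun i : Fin (n+1) => T x i < T x (Fin.last n))).card
          = (Finset.univ.filter (fun i : Fin (n+1) => x i < x j)).card := by
        refine Finset.card_bij' (fun i _ => e.symm i) (fun i _ => e i) ?_ ?_ ?_ ?_
        · intro i hi
          simp only [Finset.mem_filter, Finset.mem_univ, true_and] at hi ⊢
          rwa [hTapp, hTapp, hlast] at hi
        · intro i hi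
          simp only [Finset.mem_filter, Finset.mem_univ, true_and] at hi ⊢
          rw [hTapp, hTapp, hlast, Equiv.symm_apply_apply]
          exact hi
        · intro i _; exact Equiv.apply_symm_apply e i
        · intro i _; exact Equiv.symm_apply_apply e i
      rw [hcard]
    have hmp := measurePreserving_piCongrLeft (fun _ : Fin (n+1) => μ) e
    calc P (A j) = (P.map V) (B j) := by
            rw [Measure.map_apply hVmeas (hBmeas j), hAeq]
      _ = ν (B j) := by rw [hlaw]
      _ = ν (T ⁻¹' (B (Fin.last n))) := by rw [hTB]
      _ = (ν.map T) (B (Fin.last n)) := by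
            rw [Measure.map_apply T.measurable (hBmeas (Fin.last n))]
      _ = ν (B (Fin.last n)) := by rw [hmp.map_eq]
  -- pointwise count lower bound
  have hpt : ∀ ω, (k : ENNReal) ≤ ∑ j : Fin (n+1),
      (A j).indicator (fun _ => (1 : ENNReal)) ω := by
    intro ω
    have hcard := rank_count_lb hk1 hk2 (fun i => X i ω)
    have : ∑ j : Fin (n+1), (A j).indicator (fun _ => (1 : ENNReal)) ω
        = ((Finset.univ.filter (fun j : Fin (n+1) =>
            (Finset.univ.filter (fun i : Fin (n+1) => X i ω < X j ω)).card ≤ k - 1)).card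
            : ENNReal) := by
      rw [← Finset.sum_boole]
      refine Finset.sum_congr rfl (fun j _ => ?_)
      rw [Set.indicator_apply]
      congr 1
    rw [this]
    exact_mod_cast hcard
  have hsum : (k : ENNReal) ≤ ∑ j : Fin (n+1), P (A j) := by
    have h1 : ∫⁻ _, (k : ENNReal) ∂P
        ≤ ∫⁻ ω, ∑ j : Fin (n+1), (A j).indicator (fun _ => (1 : ENNReal)) ω ∂P :=
      lintegral_mono hpt
    rw [lintegral_const, measure_univ, mul_one,
      lintegral_finset_sum _ (fun j _ => measurable_const.indicator (hAmeas j))] at h1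
    simpa [lintegral_indicator_const, hAmeas] using h1
  have hfin : ∑ j : Fin (n+1), P (A j) = ((n : ENNReal) + 1) * ν (B (Fin.last n)) := by
    simp only [hsame]
    rw [Finset.sum_const, Finset.card_univ, Fintype.card_fin, nsmul_eq_mul]
    push_cast
    ring
  rw [hfin] at hsum
  have hgoal : P {ω | (Finset.univ.filter
      (fun i : Fin (n + 1) => X i ω < X (Fin.last n) ω)).card ≤ k - 1}
      = ν (B (Fin.last n)) := hsame (Fin.last n)
  rw [hgoal]
  exact ENNReal.div_le_of_le_mul' hsum
end
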